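/- Let N_A, N_B ≥ 2 and let ψ : Matrix (Fin N_A) (Fin N_B) ℂ, with associated pure-state density matrix ρ_ψ((m,μ),(n,ν)) = ψ(m,μ) · conj(ψ(n,ν)). Then the rank of the realigned matrix is the square of the rank of ψ: rank(RM(ρ_ψ)) = (rank ψ)². -/

import Mathlib

open Matrix Kronecker Complex ComplexOrder

noncomputable def traceNorm {m n : Type*} [Fintype m] [Fintype n] [DecidableEq n]
    (M : Matrix m n ℂ) : ℝ :=
  (((Matrix.posSemidef_conjTranspose_mul_self M).1.eigenvectorUnitary : Matrix n n ℂ) *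
    diagonal (((↑) : ℝ → ℂ) ∘ (fun x : ℝ => √x) ∘ (Matrix.posSemidef_conjTranspose_mul_self M).1.eigenvalues) *
    (star ((Matrix.posSemidef_conjTranspose_mul_self M).1.eigenvectorUnitary : Matrix n n ℂ))).trace.re

def realign {NA NB : ℕ} (ρ : Matrix (Fin NA × Fin NB) (Fin NA × Fin NB) ℂ) :
    Matrix (Fin NA × Fin NA) (Fin NB × Fin NB) ℂ :=
  fun p q => ρ (p.1, q.1) (p.2, q.2)

def IsDensityMatrix {n : Type*} [Fintype n] (ρ : Matrix n n ℂ) : Prop :=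
  ρ.PosSemidef ∧ ρ.trace = 1

noncomputable def hsNorm {m n : Type*} [Fintype m] [Fintype n] (M : Matrix m n ℂ) : ℝ :=
  Real.sqrt (∑ i, ∑ j, ‖M i j‖ ^ 2)

noncomputable def hsInner {m n : Type*} [Fintype m] [Fintype n] (X Y : Matrix m n ℂ) : ℂ :=
  (Xᴴ * Y).trace

noncomputable def marginalA {NA NB : ℕ} (ρ : Matrix (Fin NA × Fin NB) (Fin NA × Fin NB) ℂ) :
    Matrix (Fin NA) (Fin NA) ℂ :=
  fun m n => ∑ μ, ρ (m, μ) (n, μ)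

noncomputable def marginalB {NA NB : ℕ} (ρ : Matrix (Fin NA × Fin NB) (Fin NA × Fin NB) ℂ) :
    Matrix (Fin NB) (Fin NB) ℂ :=
  fun μ ν => ∑ m, ρ (m, μ) (m, ν)

def SeparableState {NA NB : ℕ} (ρ : Matrix (Fin NA × Fin NB) (Fin NA × Fin NB) ℂ) : Prop :=
  ∃ (ι : Type) (s : Finset ι) (p : ι → ℝ)
    (ρA : ι → Matrix (Fin NA) (Fin NA) ℂ) (ρB : ι → Matrix (Fin NB) (Fin NB) ℂ),
    (∀ i ∈ s, 0 < p i) ∧ (∑ i ∈ s, p i = 1) ∧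
    (∀ i ∈ s, IsDensityMatrix (ρA i)) ∧ (∀ i ∈ s, IsDensityMatrix (ρB i)) ∧
    ρ = ∑ i ∈ s, (p i : ℂ) • (ρA i ⊗ₖ ρB i)

noncomputable def l2OpNorm {n : Type*} [Fintype n] [DecidableEq n] (M : Matrix n n ℂ) : ℝ :=
  ‖Matrix.toEuclideanCLM (𝕜 := ℂ) (n := n) M‖
open TensorProduct in
lemma finrank_range_tensorMap {K M N M' N' : Type*} [Field K]
    [AddCommGroup M] [AddCommGroup N] [AddCommGroup M'] [AddCommGroup N']
    [Module K M] [Module K N] [Module K M'] [Module K N']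
    [FiniteDimensional K M'] [FiniteDimensional K N']
    (f : M →ₗ[K] M') (g : N →ₗ[K] N') :
    Module.finrank K (LinearMap.range (TensorProduct.map f g)) =
      Module.finrank K (LinearMap.range f) * Module.finrank K (LinearMap.range g) := by
  have hfac : TensorProduct.map f g =
      (TensorProduct.mapIncl (LinearMap.range f) (LinearMap.range g)).comp
        (TensorProduct.map f.rangeRestrict g.rangeRestrict) := by
    rw [TensorProduct.mapIncl, ← TensorProduct.map_comp]
    congr 1
  have hsurj : Function.Surjective (TensorProduct.map f.rangeRestrict g.rangeRestrict) :=
    TensorProduct.map_surjective f.surjective_rangeRestrict g.surjective_rangeRestrict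
  have hrange : LinearMap.range (TensorProduct.map f g) =
      LinearMap.range (TensorProduct.mapIncl (LinearMap.range f) (LinearMap.range g)) := by
    rw [hfac, LinearMap.range_comp, LinearMap.range_eq_top.2 hsurj, Submodule.map_top]
  rw [hrange]
  have hinj : Function.Injective
      (TensorProduct.mapIncl (LinearMap.range f) (LinearMap.range g)) :=
    Module.Flat.tensorProduct_mapIncl_injective_of_right _ _
  rw [← (LinearEquiv.ofInjective _ hinj).finrank_eq]
  exact Module.finrank_tensorProduct

lemma rank_kronecker_aux {a b c d : ℕ} (A : Matrix (Fin a) (Fin b) ℂ)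
    (B : Matrix (Fin c) (Fin d) ℂ) : (A ⊗ₖ B).rank = A.rank * B.rank := by
  let ba := Pi.basisFun ℂ (Fin a)
  let bb := Pi.basisFun ℂ (Fin b)
  let bc := Pi.basisFun ℂ (Fin c)
  let bd := Pi.basisFun ℂ (Fin d)
  rw [Matrix.rank_eq_finrank_range_toLin (A ⊗ₖ B) (ba.tensorProduct bc) (bb.tensorProduct bd),
    Matrix.toLin_kronecker,
    Matrix.rank_eq_finrank_range_toLin A ba bb,
    Matrix.rank_eq_finrank_range_toLin B bc bd]
  exact finrank_range_tensorMap _ _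

theorem rank_realign_pure_state
    (NA NB : ℕ) (hNA : 2 ≤ NA) (hNB : 2 ≤ NB)
    (ψ : Matrix (Fin NA) (Fin NB) ℂ)
    (ρψ : Matrix (Fin NA × Fin NB) (Fin NA × Fin NB) ℂ)
    (hρψ : ∀ m μ n ν, ρψ (m, μ) (n, ν) = ψ m μ * (starRingEnd ℂ) (ψ n ν)) :
    (realign ρψ).rank = ψ.rank ^ 2 := by
  have h : realign ρψ = ψ ⊗ₖ ψ.map (starRingEnd ℂ) := by
    ext ⟨m, n⟩ ⟨μ, ν⟩
    simp [realign, hρψ, Matrix.kroneckerMap_apply]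
  have h2 : ψ.map (starRingEnd ℂ) = ψᴴᵀ := by
    ext i j; simp [Matrix.conjTranspose_apply]
  rw [h, rank_kronecker_aux, h2, Matrix.rank_transpose, Matrix.rank_conjTranspose, sq]
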